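/- arXiv:2302.03026 — 5 statements merged into one kernel-verified Lean document; each statement's English description precedes it below -/
import Mathlib

section
/- If a posterior estimator p̂ has coverage probability exactly 1 − α for every α, every x, and every positionable credible region generator (credible regions that are balls centered at arbitrary points θ_r, shrinking to {θ_r} as α → 1), and p̂(·|x) is continuous and strictly positive everywhere, and the true posterior p(·|x) is continuous, then p̂(θ|x) = p(θ|x) for all θ and x. -/
open MeasureTheory Metric

/-- If a continuous integrable function has zero integral over every closed ball
centered at `θ`, then its value at `θ` is nonpositive. -/
lemma aux_center {n : ℕ} (g : EuclideanSpace ℝ (Fin n) → ℝ) (hg : Continuous g)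
    (hgi : Integrable g) (θ : EuclideanSpace ℝ (Fin n))
    (h0 : ∀ R : ℝ, 0 < R → (∫ t in closedBall θ R, g t) = 0) :
    g θ ≤ 0 := by
  by_contra hc
  push_neg at hc
  obtain ⟨δ, hδ, hball⟩ : ∃ δ > 0, ∀ t, dist t θ < δ → |g t - g θ| < g θ / 2 := by
    have := Metric.continuousAt_iff.1 (hg.continuousAt (x := θ)) (g θ / 2) (by linarith)
    obtain ⟨δ, hδ, h⟩ := this
    exact ⟨δ, hδ, fun t ht => by simpa [Real.dist_eq] using h ht⟩
  have hlow : ∀ t ∈ closedBall θ (δ / 2), g θ / 2 ≤ g t := by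
    intro t ht
    have : dist t θ < δ := lt_of_le_of_lt (mem_closedBall.1 ht) (by linarith)
    have := abs_lt.1 (hball t this)
    linarith [this.1]
  have h1 : g θ / 2 * (volume (closedBall θ (δ / 2))).toReal ≤
      ∫ t in closedBall θ (δ / 2), g t :=
    setIntegral_ge_of_const_le_real measurableSet_closedBall measure_closedBall_lt_top.ne
      hlow hgi.integrableOn
  rw [h0 (δ / 2) (by linarith)] at h1
  have hv : 0 < (volume (closedBall θ (δ / 2))).toReal :=
    ENNReal.toReal_pos (measure_closedBall_pos _ _ (by linarith)).ne'
      measure_closedBall_lt_top.ne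
  nlinarith

/-- If a posterior estimator p̂ has coverage probability exactly 1 − α for every
α ∈ (0,1), every x, and every positionable credible region generator (balls centered at arbitrary
points θ_r, shrinking to the center as α → 1), and p̂(·|x) is continuous and strictly positive
everywhere while the true posterior p(·|x) is continuous, then p̂(θ|x) = p(θ|x) for all θ, x. -/
theorem stmt1 {n m : ℕ}
    (p phat : EuclideanSpace ℝ (Fin n) → EuclideanSpace ℝ (Fin m) → ℝ)
    (hphat_cont : ∀ x, Continuous fun θ => phat θ x)
    (hphat_pos : ∀ θ x, 0 < phat θ x)
    (hp_cont : ∀ x, Continuous fun θ => p θ x)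
    (hp_nonneg : ∀ θ x, 0 ≤ p θ x)
    (hp_int : ∀ x, Integrable fun θ => p θ x)
    (hphat_int : ∀ x, Integrable fun θ => phat θ x)
    (hp_density : ∀ x, ∫ θ, p θ x = 1)
    (hphat_density : ∀ x, ∫ θ, phat θ x = 1)
    -- coverage probability equals 1 − α for every positionable (ball-shaped) credible region:
    (hcov : ∀ (θr : EuclideanSpace ℝ (Fin n)) (x : EuclideanSpace ℝ (Fin m)) (α : ℝ),
      α ∈ Set.Ioo (0 : ℝ) 1 → ∀ R : ℝ, 0 < R →
        (∫ θ in Metric.closedBall θr R, phat θ x) = 1 - α →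
        (∫ θ in Metric.closedBall θr R, p θ x) = 1 - α) :
    ∀ θ x, phat θ x = p θ x := by
  intro θ x
  -- Key step: the integrals of `p` and `phat` agree on every closed ball centered at `θ`.
  have key : ∀ R : ℝ, 0 < R →
      (∫ t in closedBall θ R, phat t x) = ∫ t in closedBall θ R, p t x := by
    intro R hR
    by_cases hn : n = 0
    · -- In dimension 0 every closed ball of positive radius is the whole (trivial) space.
      subst hn
      have hball : closedBall θ R = Set.univ := by
        ext t
        simp only [Set.mem_univ, iff_true, mem_closedBall]
        have : t = θ := Subsingleton.elim _ _
        simp [this]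
        linarith
      rw [hball]
      simp only [Measure.restrict_univ]
      rw [hp_density x, hphat_density x]
    · -- In positive dimension the ball has mass strictly between 0 and 1 for `phat`.
      haveI : Nonempty (Fin n) := ⟨⟨0, Nat.pos_of_ne_zero hn⟩⟩
      set F := ∫ t in closedBall θ R, phat t x with hF
      have hFpos : 0 < F := by
        rw [hF]
        refine (setIntegral_pos_iff_support_of_nonneg_ae
          (Filter.Eventually.of_forall fun t => (hphat_pos t x).le)
          (hphat_int x).integrableOn).2 ?_
        have hsupp : (Function.support fun t => phat t x) = Set.univ :=
          Set.eq_univ_of_forall fun t => (hphat_pos t x).ne'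
        rw [hsupp, Set.univ_inter]
        exact measure_closedBall_pos _ _ hR
      have hFlt : F < 1 := by
        have hsplit : F + (∫ t in (closedBall θ R)ᶜ, phat t x) = 1 := by
          rw [hF, integral_add_compl measurableSet_closedBall (hphat_int x),
            hphat_density x]
        have hcpos : 0 < ∫ t in (closedBall θ R)ᶜ, phat t x := by
          refine (setIntegral_pos_iff_support_of_nonneg_ae
            (Filter.Eventually.of_forall fun t => (hphat_pos t x).le)
            (hphat_int x).integrableOn).2 ?_
          have hsupp : (Function.support fun t => phat t x) = Set.univ :=
            Set.eq_univ_of_forall fun t => (hphat_pos t x).ne'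
          rw [hsupp, Set.univ_inter]
          -- the complement contains a small ball far away from `θ`
          obtain ⟨v, hv⟩ := NormedSpace.exists_lt_norm ℝ (EuclideanSpace ℝ (Fin n)) (R + 2)
          have hsub : closedBall (θ + v) 1 ⊆ (closedBall θ R)ᶜ := by
            intro t ht
            simp only [Set.mem_compl_iff, mem_closedBall, not_le]
            have h1 : dist t (θ + v) ≤ 1 := mem_closedBall.1 ht
            have h2 : dist (θ + v) θ = ‖v‖ := by simp [dist_eq_norm]
            have h3 : dist (θ + v) θ ≤ dist (θ + v) t + dist t θ := dist_triangle _ _ _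
            rw [dist_comm (θ + v) t] at h3
            linarith [h2 ▸ h3, hv]
          calc (0 : ENNReal) < volume (closedBall (θ + v) 1) :=
                measure_closedBall_pos _ _ one_pos
            _ ≤ volume (closedBall θ R)ᶜ := measure_mono hsub
        linarith
      have := hcov θ x (1 - F) ⟨by linarith, by linarith⟩ R hR (by rw [hF]; ring)
      rw [hF] at this ⊢
      linarith
  -- Conclude pointwise equality at the center via the auxiliary lemma.
  set g : EuclideanSpace ℝ (Fin n) → ℝ := fun t => phat t x - p t x with hg
  have hgc : Continuous g := (hphat_cont x).sub (hp_cont x)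
  have hgi : Integrable g := (hphat_int x).sub (hp_int x)
  have hg0 : ∀ R : ℝ, 0 < R → (∫ t in closedBall θ R, g t) = 0 := by
    intro R hR
    rw [hg]
    rw [integral_sub (hphat_int x).integrableOn (hp_int x).integrableOn, key R hR]
    ring
  have h1 : g θ ≤ 0 := aux_center g hgc hgi θ hg0
  have h2 : (-g) θ ≤ 0 := by
    refine aux_center (-g) hgc.neg hgi.neg θ fun R hR => ?_
    simp only [Pi.neg_apply]
    rw [integral_neg, hg0 R hR, neg_zero]
  simp only [Pi.neg_apply, hg] at h1 h2
  linarith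
end

section
/- If the posterior estimator equals the prior, p̂(θ|x) = p(θ), then for DRP regions with reference points sampled from a distribution p̃(θ_r) independent of x, the expected coverage probability equals 1 − α for all α ∈ (0,1): the DRP test with x-independent reference points cannot detect the uninformative estimator. -/
open MeasureTheory

/-- If the posterior estimator equals the prior, then for DRP regions with
reference points sampled from a distribution p̃(θ_r) independent of x, the expected coverage
probability equals 1 − α: ECP = E_{p̃(θ_r)} E_{p(x,θ)}[𝟙(θ ∈ D_{θ_r})] = 1 − α, where
D_{θ_r} is the ball centered at θ_r of prior mass 1 − α and p(x,θ) = p(x|θ) p(θ). -/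
theorem stmt12 {n m : ℕ} (α : ℝ) (hα : α ∈ Set.Ioo (0 : ℝ) 1)
    (prior : EuclideanSpace ℝ (Fin n) → ℝ)
    (like : EuclideanSpace ℝ (Fin m) → EuclideanSpace ℝ (Fin n) → ℝ)
    (pref : EuclideanSpace ℝ (Fin n) → ℝ)
    (R : EuclideanSpace ℝ (Fin n) → ℝ)
    (hprior_nonneg : ∀ θ, 0 ≤ prior θ) (hprior_int : Integrable prior)
    (hprior1 : ∫ θ, prior θ = 1)
    (hlike_nonneg : ∀ x θ, 0 ≤ like x θ)
    (hlike1 : ∀ θ, ∫ x, like x θ = 1)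
    (hjoint_int : Integrable (Function.uncurry fun x θ => like x θ * prior θ))
    (hpref_nonneg : ∀ θr, 0 ≤ pref θr) (hpref_int : Integrable pref)
    (hpref1 : ∫ θr, pref θr = 1)
    (hecp_int : Integrable (fun θr => pref θr *
      ∫ x, ∫ θ in Metric.closedBall θr (R θr), like x θ * prior θ))
    -- since p̂(·|x) = prior, the DRP ball D_{θ_r} does not depend on x and has prior mass 1 − α:
    (hD : ∀ θr, ∫ θ in Metric.closedBall θr (R θr), prior θ = 1 - α) :
    (∫ θr, pref θr *
      ∫ x, ∫ θ in Metric.closedBall θr (R θr), like x θ * prior θ) = 1 - α := by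
  have key : ∀ θr, (∫ x, ∫ θ in Metric.closedBall θr (R θr), like x θ * prior θ) = 1 - α := by
    intro θr
    set D := Metric.closedBall θr (R θr) with hDdef
    have hmeas : MeasurableSet D := Metric.isClosed_closedBall.measurableSet
    have hind : Integrable (Function.uncurry fun x θ =>
        D.indicator (fun θ => like x θ * prior θ) θ) := by
      have := hjoint_int.indicator (MeasurableSet.univ.prod hmeas)
      refine this.congr ?_
      filter_upwards with p
      by_cases h : p.2 ∈ D <;>
        simp [Function.uncurry, Set.indicator, h]
    have h1 : (∫ x, ∫ θ in D, like x θ * prior θ)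
        = ∫ x, ∫ θ, D.indicator (fun θ => like x θ * prior θ) θ := by
      congr 1; ext x; rw [integral_indicator hmeas]
    rw [h1, integral_integral_swap hind]
    have h2 : ∀ θ, (∫ x, D.indicator (fun θ => like x θ * prior θ) θ)
        = D.indicator prior θ := by
      intro θ
      by_cases h : θ ∈ D
      · simp only [Set.indicator_of_mem h]
        rw [MeasureTheory.integral_mul_const, hlike1 θ, one_mul]
      · simp [Set.indicator_of_notMem h]
    simp_rw [h2]
    rw [integral_indicator hmeas, hD θr]
  calc (∫ θr, pref θr * ∫ x, ∫ θ in Metric.closedBall θr (R θr), like x θ * prior θ)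
      = ∫ θr, pref θr * (1 - α) := by congr 1; ext θr; rw [key θr]
    _ = (∫ θr, pref θr) * (1 - α) := by rw [integral_mul_const]
    _ = 1 - α := by rw [hpref1, one_mul]
end

section
/- Euler–Lagrange step: let F : V × U → ℝ be continuous with F(x, ·) differentiable, and suppose the integral ∫ p(x) F(x, θ_r(x)) dx is equal to a constant (independent of the choice of measurable function θ_r : V → U). If p(x) > 0 everywhere, then the gradient ∇_{θ_r} F(x, θ_r) vanishes for all x and θ_r. -/
open MeasureTheory

/-- Euler–Lagrange step: let F : V × U → ℝ be continuous with F(x, ·)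
differentiable, and suppose ∫ p(x) F(x, θ_r(x)) dx takes the same value K for every measurable
position function θ_r : V → U. If p(x) > 0 everywhere, the gradient ∇_{θ_r} F(x, ·) vanishes
everywhere. -/
theorem stmt14 {m k : ℕ}
    (p : EuclideanSpace ℝ (Fin m) → ℝ)
    (F : EuclideanSpace ℝ (Fin m) → EuclideanSpace ℝ (Fin k) → ℝ)
    (hp_pos : ∀ x, 0 < p x) (hp_int : Integrable p) (hp1 : ∫ x, p x = 1)
    (hF_cont : Continuous fun q : EuclideanSpace ℝ (Fin m) × EuclideanSpace ℝ (Fin k) =>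
      F q.1 q.2)
    (hF_diff : ∀ x, Differentiable ℝ (F x))
    (hint : ∀ θr : EuclideanSpace ℝ (Fin m) → EuclideanSpace ℝ (Fin k),
      Measurable θr → Integrable fun x => p x * F x (θr x))
    (K : ℝ)
    (hconst : ∀ θr : EuclideanSpace ℝ (Fin m) → EuclideanSpace ℝ (Fin k),
      Measurable θr → (∫ x, p x * F x (θr x)) = K) :
    ∀ x u, fderiv ℝ (F x) u = 0 := by

  classical
  -- Step 1: F x v = F x u for all x, u, v.
  have key : ∀ v u x, F x v = F x u := by
    intro v u
    have hconstv : ∀ x, F x v - F x u = 0 := by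
      set g : EuclideanSpace ℝ (Fin m) → ℝ := fun x => p x * (F x v - F x u) with hg
      have hgint : Integrable g := by
        have e : g = fun x => p x * F x v - p x * F x u := by
          funext x; simp [hg, mul_sub]
        rw [e]
        exact (hint (fun _ => v) measurable_const).sub (hint (fun _ => u) measurable_const)
      have hsets : ∀ s : Set (EuclideanSpace ℝ (Fin m)), MeasurableSet s →
          volume s < ⊤ → ∫ x in s, g x = 0 := by
        intro s hs _
        set θ : EuclideanSpace ℝ (Fin m) → EuclideanSpace ℝ (Fin k) :=
          fun x => if x ∈ s then v else u with hθ
        have hθm : Measurable θ := Measurable.ite hs measurable_const measurable_const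
        have h1 : (∫ x, p x * F x (θ x)) = K := hconst θ hθm
        have h2 : (∫ x, p x * F x u) = K := hconst (fun _ => u) measurable_const
        have hdiff : (∫ x, (p x * F x (θ x) - p x * F x u)) = 0 := by
          rw [integral_sub (hint θ hθm) (hint (fun _ => u) measurable_const), h1, h2, sub_self]
        have hind : (fun x => p x * F x (θ x) - p x * F x u) = s.indicator g := by
          funext x
          by_cases hx : x ∈ s <;> simp [hθ, hg, hx, mul_sub]
        rw [← integral_indicator hs, ← hind, hdiff]
      have hae : g =ᵐ[volume] 0 :=
        hgint.ae_eq_zero_of_forall_setIntegral_eq_zero hsets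
      have hae2 : (fun x => F x v - F x u) =ᵐ[volume] (fun _ => (0:ℝ)) := by
        filter_upwards [hae] with x hx
        have hp := (hp_pos x).ne'
        simpa [hg] using (mul_eq_zero.mp hx).resolve_left hp
      have hcont : Continuous fun x => F x v - F x u :=
        (hF_cont.comp (continuous_id.prodMk continuous_const)).sub
          (hF_cont.comp (continuous_id.prodMk continuous_const))
      have := (hcont.ae_eq_iff_eq volume continuous_const).mp hae2
      intro x; exact congrFun this x
    intro x
    have := hconstv x
    linarith
  intro x u
  have hFc : F x = fun _ => F x u := funext fun v => key v u x
  rw [hFc]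
  exact fderiv_const_apply _
end

section
/- In the Gaussian lensing model, the time-dependent likelihood is tractable: if x = Aθ₀ + n with n ~ N(0, σ_n² I), the prior on θ₀ is N(μ₀, Σ₀), and θ = θ₀ + ε with ε ~ N(0, σ_t² I), then the conditional distribution of x given θ is Gaussian with mean A θ_c(θ) + A μ_c and covariance σ_n² I + A Σ_c Aᵀ, where Σ_c = (Σ₀⁻¹ + σ_t⁻² I)⁻¹ and θ_c(θ) = σ_t⁻² Σ_c θ (and μ_c = Σ_c Σ₀⁻¹ μ₀). -/
open MeasureTheory Matrix

/-- The multivariate Gaussian density N(θ | μ, S) on ℝⁿ. -/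
noncomputable def gaussianDensity {n : ℕ} (μ : Fin n → ℝ) (S : Matrix (Fin n) (Fin n) ℝ)
    (θ : Fin n → ℝ) : ℝ :=
  (Real.sqrt ((2 * Real.pi) ^ n * S.det))⁻¹ *
    Real.exp (-(1 / 2) * ((θ - μ) ⬝ᵥ (S⁻¹ *ᵥ (θ - μ))))

section Helpers
open Real

lemma mulVec_dot {k l : ℕ} (M : Matrix (Fin k) (Fin l) ℝ) (v : Fin l → ℝ) (w : Fin k → ℝ) :
    (M *ᵥ v) ⬝ᵥ w = v ⬝ᵥ (Mᵀ *ᵥ w) := by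
  rw [dotProduct_mulVec, vecMul_transpose, dotProduct_comm]

lemma dot_sym {k : ℕ} {M : Matrix (Fin k) (Fin k) ℝ} (hM : Mᵀ = M) (u v : Fin k → ℝ) :
    u ⬝ᵥ (M *ᵥ v) = v ⬝ᵥ (M *ᵥ u) := by
  conv_lhs => rw [← hM]
  rw [← mulVec_dot, dotProduct_comm]

lemma quad_sub {k : ℕ} {M : Matrix (Fin k) (Fin k) ℝ} (hM : Mᵀ = M) (u w : Fin k → ℝ) :
    (u - w) ⬝ᵥ (M *ᵥ (u - w)) =
      u ⬝ᵥ (M *ᵥ u) - 2 * (w ⬝ᵥ (M *ᵥ u)) + w ⬝ᵥ (M *ᵥ w) := by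
  rw [Matrix.mulVec_sub, dotProduct_sub, sub_dotProduct, sub_dotProduct,
    dot_sym hM u w]
  ring

lemma gauss_std {k : ℕ} :
    ∫ z : Fin k → ℝ, Real.exp (-(1/2) * (z ⬝ᵥ z)) = Real.sqrt ((2 * π) ^ k) := by
  have h : ∀ z : Fin k → ℝ, Real.exp (-(1/2) * (z ⬝ᵥ z)) = ∏ i, Real.exp (-(1/2) * (z i)^2) := by
    intro z
    rw [← Real.exp_sum]
    congr 1
    simp [dotProduct, Finset.mul_sum, sq]
  simp_rw [h]
  rw [MeasureTheory.volume_pi, MeasureTheory.integral_fintype_prod_eq_pow (ι := Fin k) (fun x : ℝ => Real.exp (-(1/2) * x^2))]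
  have : ∫ x : ℝ, Real.exp (-(1/2) * x^2) = Real.sqrt (2*π) := by
    rw [integral_gaussian]
    rw [show π / (1/2:ℝ) = 2 * π by ring]
  rw [this, Fintype.card_fin]
  have h2 : (0:ℝ) ≤ 2 * π := by positivity
  rw [Real.sqrt_eq_rpow, Real.sqrt_eq_rpow, ← Real.rpow_natCast ((2*π) ^ (1/2:ℝ)) k,
    ← Real.rpow_natCast (2*π) k, ← Real.rpow_mul h2, ← Real.rpow_mul h2, mul_comm (1/2:ℝ)]

open scoped MatrixOrder in
lemma gauss_int {k : ℕ} {Q : Matrix (Fin k) (Fin k) ℝ} (hQ : Q.PosDef) :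
    ∫ y : Fin k → ℝ, Real.exp (-(1/2) * (y ⬝ᵥ (Q *ᵥ y)))
      = Real.sqrt ((2 * π) ^ k) / Real.sqrt Q.det := by
  set R := CFC.sqrt Q with hRdef
  have hRps : R.PosSemidef := (CFC.sqrt_nonneg Q).posSemidef
  have hRR : R * R = Q := CFC.sqrt_mul_sqrt_self Q hQ.posSemidef.nonneg
  have hRsym : Rᵀ = R := by
    rw [← Matrix.conjTranspose_eq_transpose_of_trivial]
    exact hRps.isHermitian
  have hdet2 : R.det * R.det = Q.det := by rw [← Matrix.det_mul, hRR]
  have hdetQ : 0 < Q.det := hQ.det_pos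
  have hdetR : R.det ≠ 0 := by
    intro h
    rw [h, mul_zero] at hdet2
    exact hdetQ.ne' hdet2.symm
  have hquad : ∀ y : Fin k → ℝ, y ⬝ᵥ (Q *ᵥ y) = (R *ᵥ y) ⬝ᵥ (R *ᵥ y) := by
    intro y
    rw [mulVec_dot, hRsym, Matrix.mulVec_mulVec, hRR]
  simp_rw [hquad]
  have hmap := Real.map_matrix_volume_pi_eq_smul_volume_pi hdetR
  have hcont : Continuous fun z : Fin k → ℝ => Real.exp (-(1/2) * (z ⬝ᵥ z)) := by
    apply Real.continuous_exp.comp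
    apply Continuous.mul continuous_const
    exact continuous_finset_sum _ fun i _ => ((continuous_apply i).mul (continuous_apply i))
  have hmeas : Measurable (Matrix.toLin' R) := (Matrix.toLin' R).continuous_of_finiteDimensional.measurable
  have h1 : ∫ y : Fin k → ℝ, Real.exp (-(1/2) * ((R *ᵥ y) ⬝ᵥ (R *ᵥ y)))
      = ∫ z : Fin k → ℝ, Real.exp (-(1/2) * (z ⬝ᵥ z)) ∂(Measure.map (Matrix.toLin' R) volume) := by
    rw [integral_map hmeas.aemeasurable hcont.aestronglyMeasurable]
    simp_rw [Matrix.toLin'_apply]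
  rw [h1, hmap, integral_smul_measure, gauss_std, ENNReal.toReal_ofReal (abs_nonneg _),
    smul_eq_mul]
  have habs : |R.det| = Real.sqrt Q.det := by
    rw [← Real.sqrt_sq_eq_abs, sq, hdet2]
  rw [abs_inv, habs, div_eq_mul_inv, mul_comm]

lemma smul_one_posDef {k : ℕ} {c : ℝ} (hc : 0 < c) :
    (c • (1 : Matrix (Fin k) (Fin k) ℝ)).PosDef := by
  have h : c • (1 : Matrix (Fin k) (Fin k) ℝ) = Matrix.diagonal (fun _ => c) := by
    ext i j
    by_cases hij : i = j <;> simp [Matrix.diagonal, Matrix.one_apply, hij]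
  rw [h, Matrix.posDef_diagonal_iff]
  exact fun _ => hc

lemma det_conv {n m : ℕ} (A : Matrix (Fin m) (Fin n) ℝ) {S : Matrix (Fin n) (Fin n) ℝ}
    {B : Matrix (Fin m) (Fin m) ℝ} (hS : S.PosDef) (hB : B.PosDef) :
    (B + A * S * Aᵀ).det = B.det * (S.det * (S⁻¹ + Aᵀ * B⁻¹ * A).det) := by
  have h1 : B + A * S * Aᵀ = B + A * (S * Aᵀ) := by rw [Matrix.mul_assoc]
  rw [h1, Matrix.det_add_mul A (S * Aᵀ) (isUnit_iff_ne_zero.mpr hB.det_pos.ne')]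
  congr 1
  have h2 : (1 : Matrix (Fin n) (Fin n) ℝ) + S * Aᵀ * B⁻¹ * A = S * (S⁻¹ + Aᵀ * B⁻¹ * A) := by
    rw [Matrix.mul_add, Matrix.mul_nonsing_inv _ (isUnit_iff_ne_zero.mpr hS.det_pos.ne')]
    simp [Matrix.mul_assoc]
  rw [h2, Matrix.det_mul]

lemma exponent_eq {n m : ℕ} (A : Matrix (Fin m) (Fin n) ℝ) (μ : Fin n → ℝ) (x : Fin m → ℝ)
    {S : Matrix (Fin n) (Fin n) ℝ} {B : Matrix (Fin m) (Fin m) ℝ}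
    (hS : S.PosDef) (hB : B.PosDef) (hP : (S⁻¹ + Aᵀ * B⁻¹ * A).PosDef) (u : Fin n → ℝ) :
    (u - μ) ⬝ᵥ (S⁻¹ *ᵥ (u - μ)) + (x - A *ᵥ u) ⬝ᵥ (B⁻¹ *ᵥ (x - A *ᵥ u))
    = (u - (S⁻¹ + Aᵀ * B⁻¹ * A)⁻¹ *ᵥ (Aᵀ *ᵥ (B⁻¹ *ᵥ x) + S⁻¹ *ᵥ μ)) ⬝ᵥ
        ((S⁻¹ + Aᵀ * B⁻¹ * A) *ᵥ
          (u - (S⁻¹ + Aᵀ * B⁻¹ * A)⁻¹ *ᵥ (Aᵀ *ᵥ (B⁻¹ *ᵥ x) + S⁻¹ *ᵥ μ)))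
      + (x - A *ᵥ μ) ⬝ᵥ ((B + A * S * Aᵀ)⁻¹ *ᵥ (x - A *ᵥ μ)) := by
  set P : Matrix (Fin n) (Fin n) ℝ := S⁻¹ + Aᵀ * B⁻¹ * A with hPdef
  set a : Fin n → ℝ := Aᵀ *ᵥ (B⁻¹ *ᵥ x) with hadef
  set b : Fin n → ℝ := S⁻¹ *ᵥ μ with hbdef
  -- symmetry facts
  have hSsym : Sᵀ = S := by
    rw [← Matrix.conjTranspose_eq_transpose_of_trivial]; exact hS.isHermitian
  have hBsym : Bᵀ = B := by
    rw [← Matrix.conjTranspose_eq_transpose_of_trivial]; exact hB.isHermitian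
  have hSisym : (S⁻¹)ᵀ = S⁻¹ := by rw [Matrix.transpose_nonsing_inv, hSsym]
  have hBisym : (B⁻¹)ᵀ = B⁻¹ := by rw [Matrix.transpose_nonsing_inv, hBsym]
  have hPsym : Pᵀ = P := by
    rw [hPdef, Matrix.transpose_add, hSisym, Matrix.transpose_mul, Matrix.transpose_mul,
      Matrix.transpose_transpose, hBisym, Matrix.mul_assoc]
  have hPisym : (P⁻¹)ᵀ = P⁻¹ := by rw [Matrix.transpose_nonsing_inv, hPsym]
  have hPdetu : IsUnit P.det := isUnit_iff_ne_zero.mpr hP.det_pos.ne'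
  have hPP : P * P⁻¹ = 1 := Matrix.mul_nonsing_inv P hPdetu
  have hPiP : P⁻¹ * P = 1 := Matrix.nonsing_inv_mul P hPdetu
  -- Woodbury
  have hWood : (B + A * S * Aᵀ)⁻¹ = B⁻¹ - B⁻¹ * A * P⁻¹ * Aᵀ * B⁻¹ := 
by
    rw [hPdef]
    exact Matrix.add_mul_mul_inv_eq_sub B A S Aᵀ hB.isUnit hS.isUnit (hPdef ▸ hP.isUnit)
  -- expansions
  have e1 := quad_sub hSisym u μ
  have e2 := quad_sub hBisym x (A *ᵥ u)
  have e3 : (A *ᵥ u) ⬝ᵥ (B⁻¹ *ᵥ x) = u ⬝ᵥ a := by rw [mulVec_dot, hadef]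
  have e4 : (A *ᵥ u) ⬝ᵥ (B⁻¹ *ᵥ (A *ᵥ u)) = u ⬝ᵥ ((Aᵀ * B⁻¹ * A) *ᵥ u) := by
    rw [mulVec_dot, Matrix.mulVec_mulVec, Matrix.mulVec_mulVec]
  have e5 := quad_sub hPsym u (P⁻¹ *ᵥ (a + b))
  have e6 : (P⁻¹ *ᵥ (a + b)) ⬝ᵥ (P *ᵥ u) = (a + b) ⬝ᵥ u := by
    rw [mulVec_dot, hPisym, Matrix.mulVec_mulVec, hPiP, Matrix.one_mulVec]
  have e7 : (P⁻¹ *ᵥ (a + b)) ⬝ᵥ (P *ᵥ (P⁻¹ *ᵥ (a + b))) = (a + b) ⬝ᵥ (P⁻¹ *ᵥ (a + b)) := by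
    rw [Matrix.mulVec_mulVec, hPP, Matrix.one_mulVec, mulVec_dot, hPisym]
  have e8 : u ⬝ᵥ (P *ᵥ u) = u ⬝ᵥ (S⁻¹ *ᵥ u) + u ⬝ᵥ ((Aᵀ * B⁻¹ * A) *ᵥ u) := by
    rw [hPdef, Matrix.add_mulVec, dotProduct_add]
  have e9 : (a + b) ⬝ᵥ u = u ⬝ᵥ a + μ ⬝ᵥ (S⁻¹ *ᵥ u) := by
    rw [add_dotProduct, dotProduct_comm a u, hbdef, mulVec_dot, hSisym]
  -- the constant term
  have e11 : Aᵀ *ᵥ (B⁻¹ *ᵥ (x - A *ᵥ μ)) = (a + b) - P *ᵥ μ := by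
    rw [Matrix.mulVec_sub, Matrix.mulVec_sub, hadef, hPdef, Matrix.add_mulVec,
      Matrix.mulVec_mulVec, Matrix.mulVec_mulVec, hbdef]
    simp only [Matrix.mulVec_mulVec]
    abel
  have e10 : (x - A *ᵥ μ) ⬝ᵥ ((B + A * S * Aᵀ)⁻¹ *ᵥ (x - A *ᵥ μ))
      = (x - A *ᵥ μ) ⬝ᵥ (B⁻¹ *ᵥ (x - A *ᵥ μ))
        - ((a + b) - P *ᵥ μ) ⬝ᵥ (P⁻¹ *ᵥ ((a + b) - P *ᵥ μ)) := by
    rw [hWood, Matrix.sub_mulVec, dotProduct_sub]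
    congr 1
    have : (B⁻¹ * A * P⁻¹ * Aᵀ * B⁻¹) *ᵥ (x - A *ᵥ μ)
        = B⁻¹ *ᵥ (A *ᵥ (P⁻¹ *ᵥ (Aᵀ *ᵥ (B⁻¹ *ᵥ (x - A *ᵥ μ))))) := by
      simp [Matrix.mulVec_mulVec, Matrix.mul_assoc]
    rw [this, dot_sym hBisym, mulVec_dot, e11, mulVec_dot, hPisym]
  have e12 : (x - A *ᵥ μ) ⬝ᵥ (B⁻¹ *ᵥ (x - A *ᵥ μ))
      = x ⬝ᵥ (B⁻¹ *ᵥ x) - 2 * (μ ⬝ᵥ a) + μ ⬝ᵥ ((Aᵀ * B⁻¹ * A) *ᵥ μ) := by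
    rw [quad_sub hBisym x (A *ᵥ μ), mulVec_dot A μ (B⁻¹ *ᵥ x), mulVec_dot, hadef]
    simp only [Matrix.mulVec_mulVec, Matrix.mul_assoc]
  have e13 : ((a + b) - P *ᵥ μ) ⬝ᵥ (P⁻¹ *ᵥ ((a + b) - P *ᵥ μ))
      = (a + b) ⬝ᵥ (P⁻¹ *ᵥ (a + b)) - 2 * (μ ⬝ᵥ (a + b)) + μ ⬝ᵥ (P *ᵥ μ) := by
    rw [quad_sub hPisym (a + b) (P *ᵥ μ), mulVec_dot P μ (P⁻¹ *ᵥ (a+b)), hPsym,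
      Matrix.mulVec_mulVec, hPP, Matrix.one_mulVec,
      mulVec_dot P μ (P⁻¹ *ᵥ (P *ᵥ μ)), hPsym, Matrix.mulVec_mulVec, hPP, Matrix.one_mulVec]
  have e14 : μ ⬝ᵥ ((Aᵀ * B⁻¹ * A) *ᵥ μ) = μ ⬝ᵥ (P *ᵥ μ) - μ ⬝ᵥ b := by
    rw [hPdef, Matrix.add_mulVec, dotProduct_add, hbdef]
    ring
  have e15 : μ ⬝ᵥ (a + b) = μ ⬝ᵥ a + μ ⬝ᵥ b := dotProduct_add μ a b
  have e16 : μ ⬝ᵥ b = μ ⬝ᵥ (S⁻¹ *ᵥ μ) := by rw [hbdef]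
  rw [e1, e2, e3, e4, e5, e6, e7, e8, e9, e10, e12, e13, e14, e15, e16]
  ring


lemma gauss_conv {n m : ℕ} (A : Matrix (Fin m) (Fin n) ℝ) (μ : Fin n → ℝ) (x : Fin m → ℝ)
    {S : Matrix (Fin n) (Fin n) ℝ} {B : Matrix (Fin m) (Fin m) ℝ}
    (hS : S.PosDef) (hB : B.PosDef) :
    (∫ u : Fin n → ℝ,
        ((Real.sqrt ((2 * π) ^ n * S.det))⁻¹ *
          Real.exp (-(1/2) * ((u - μ) ⬝ᵥ (S⁻¹ *ᵥ (u - μ))))) *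
        ((Real.sqrt ((2 * π) ^ m * B.det))⁻¹ *
          Real.exp (-(1/2) * ((x - A *ᵥ u) ⬝ᵥ (B⁻¹ *ᵥ (x - A *ᵥ u))))))
      = (Real.sqrt ((2 * π) ^ m * (B + A * S * Aᵀ).det))⁻¹ *
          Real.exp (-(1/2) * ((x - A *ᵥ μ) ⬝ᵥ ((B + A * S * Aᵀ)⁻¹ *ᵥ (x - A *ᵥ μ)))) := by
  have hAtBA : (Aᵀ * B⁻¹ * A).PosSemidef := by
    have h := hB.inv.posSemidef.conjTranspose_mul_mul_same A
    rwa [Matrix.conjTranspose_eq_transpose_of_trivial] at h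
  have hP : (S⁻¹ + Aᵀ * B⁻¹ * A).PosDef := hS.inv.add_posSemidef hAtBA
  set P : Matrix (Fin n) (Fin n) ℝ := S⁻¹ + Aᵀ * B⁻¹ * A with hPdef
  set mstar : Fin n → ℝ := P⁻¹ *ᵥ (Aᵀ *ᵥ (B⁻¹ *ᵥ x) + S⁻¹ *ᵥ μ) with hmstar
  set C : ℝ := (Real.sqrt ((2 * π) ^ n * S.det))⁻¹ * (Real.sqrt ((2 * π) ^ m * B.det))⁻¹ *
      Real.exp (-(1/2) * ((x - A *ᵥ μ) ⬝ᵥ ((B + A * S * Aᵀ)⁻¹ *ᵥ (x - A *ᵥ μ)))) with hC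
  have hpt : ∀ u : Fin n → ℝ,
      ((Real.sqrt ((2 * π) ^ n * S.det))⁻¹ *
          Real.exp (-(1/2) * ((u - μ) ⬝ᵥ (S⁻¹ *ᵥ (u - μ))))) *
        ((Real.sqrt ((2 * π) ^ m * B.det))⁻¹ *
          Real.exp (-(1/2) * ((x - A *ᵥ u) ⬝ᵥ (B⁻¹ *ᵥ (x - A *ᵥ u)))))
      = C * Real.exp (-(1/2) * ((u - mstar) ⬝ᵥ (P *ᵥ (u - mstar)))) := by
    intro u
    have hq := exponent_eq A μ x hS hB hP u
    rw [hC]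
    rw [show ∀ c1 c2 e1 e2 : ℝ, (c1 * e1) * (c2 * e2) = (c1 * c2) * (e1 * e2) from
      fun _ _ _ _ => by ring, ← Real.exp_add,
      show -(1/2) * ((u - μ) ⬝ᵥ (S⁻¹ *ᵥ (u - μ))) +
          -(1/2) * ((x - A *ᵥ u) ⬝ᵥ (B⁻¹ *ᵥ (x - A *ᵥ u)))
        = -(1/2) * ((u - μ) ⬝ᵥ (S⁻¹ *ᵥ (u - μ)) +
            (x - A *ᵥ u) ⬝ᵥ (B⁻¹ *ᵥ (x - A *ᵥ u))) from by ring, hq]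
    rw [show -(1/2) * ((u - mstar) ⬝ᵥ (P *ᵥ (u - mstar)) +
        (x - A *ᵥ μ) ⬝ᵥ ((B + A * S * Aᵀ)⁻¹ *ᵥ (x - A *ᵥ μ)))
      = -(1/2) * ((x - A *ᵥ μ) ⬝ᵥ ((B + A * S * Aᵀ)⁻¹ *ᵥ (x - A *ᵥ μ))) +
        -(1/2) * ((u - mstar) ⬝ᵥ (P *ᵥ (u - mstar))) from by ring, Real.exp_add]
    ring
  simp_rw [hpt]
  rw [MeasureTheory.integral_const_mul]
  have htrans : (∫ u : Fin n → ℝ, Real.exp (-(1/2) * ((u - mstar) ⬝ᵥ (P *ᵥ (u - mstar)))))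
      = ∫ y : Fin n → ℝ, Real.exp (-(1/2) * (y ⬝ᵥ (P *ᵥ y))) :=
    MeasureTheory.integral_sub_right_eq_self
      (fun y => Real.exp (-(1/2) * (y ⬝ᵥ (P *ᵥ y)))) mstar
  rw [htrans, gauss_int hP, hC]
  -- constants
  have hdetS : (0:ℝ) < S.det := hS.det_pos
  have hdetB : (0:ℝ) < B.det := hB.det_pos
  have hdetP : (0:ℝ) < P.det := hP.det_pos
  have h2pin : (0:ℝ) ≤ (2*π)^n := by positivity
  have h2pim : (0:ℝ) ≤ (2*π)^m := by positivity
  rw [det_conv A hS hB, ← hPdef]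
  rw [Real.sqrt_mul h2pin, Real.sqrt_mul h2pim, Real.sqrt_mul h2pim,
    Real.sqrt_mul hdetB.le, Real.sqrt_mul hdetS.le]
  have hsn : Real.sqrt ((2*π)^n) ≠ 0 := by positivity
  have hsm : Real.sqrt ((2*π)^m) ≠ 0 := by positivity
  have hsS : Real.sqrt S.det ≠ 0 := by positivity
  have hsB : Real.sqrt B.det ≠ 0 := by positivity
  have hsP : Real.sqrt P.det ≠ 0 := by positivity
  field_simp

end Helpers

/-- tractable time-dependent likelihood in the Gaussian lensing model.
With x = Aθ₀ + noise (noise ~ N(0, σ_n² I)), prior θ₀ ~ N(μ₀, Σ₀), and θ = θ₀ + ε with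
ε ~ N(0, σ_t² I), the conditional law of θ₀ given θ is N(Σ_c(σ_t⁻² θ + Σ₀⁻¹ μ₀), Σ_c) with
Σ_c = (Σ₀⁻¹ + σ_t⁻² I)⁻¹; marginalizing θ₀ gives that x | θ is Gaussian with mean
A θ_c(θ) + A μ_c and covariance σ_n² I + A Σ_c Aᵀ, where θ_c(θ) = σ_t⁻² Σ_c θ and
μ_c = Σ_c Σ₀⁻¹ μ₀. -/
theorem stmt16 {n m : ℕ} (A : Matrix (Fin m) (Fin n) ℝ) (μ₀ : Fin n → ℝ)
    (S0 : Matrix (Fin n) (Fin n) ℝ) (hS0 : S0.PosDef)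
    (σn σt : ℝ) (hσn : 0 < σn) (hσt : 0 < σt)
    (Sc : Matrix (Fin n) (Fin n) ℝ)
    (hSc : Sc = (S0⁻¹ + (σt ^ 2)⁻¹ • (1 : Matrix (Fin n) (Fin n) ℝ))⁻¹)
    (θc : (Fin n → ℝ) → Fin n → ℝ)
    (hθc : ∀ θ, θc θ = (σt ^ 2)⁻¹ • (Sc *ᵥ θ))
    (μc : Fin n → ℝ) (hμc : μc = Sc *ᵥ (S0⁻¹ *ᵥ μ₀))
    (θ : Fin n → ℝ) (x : Fin m → ℝ) :
    (∫ θ₀ : Fin n → ℝ,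
        gaussianDensity (Sc *ᵥ ((σt ^ 2)⁻¹ • θ + S0⁻¹ *ᵥ μ₀)) Sc θ₀ *
          gaussianDensity (A *ᵥ θ₀) (σn ^ 2 • (1 : Matrix (Fin m) (Fin m) ℝ)) x) =
      gaussianDensity (A *ᵥ θc θ + A *ᵥ μc) (σn ^ 2 • 1 + A * Sc * Aᵀ) x := by
  have hScPD : Sc.PosDef := by
    rw [hSc]
    exact ((hS0.inv).add (smul_one_posDef (by positivity))).inv
  have hBPD : ((σn ^ 2) • (1 : Matrix (Fin m) (Fin m) ℝ)).PosDef :=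
    smul_one_posDef (by positivity)
  have hmean : A *ᵥ θc θ + A *ᵥ μc = A *ᵥ (Sc *ᵥ ((σt ^ 2)⁻¹ • θ + S0⁻¹ *ᵥ μ₀)) := by
    rw [hθc, hμc]
    simp [Matrix.mulVec_add, Matrix.mulVec_smul]
  rw [hmean]
  unfold gaussianDensity
  exact gauss_conv A (Sc *ᵥ ((σt ^ 2)⁻¹ • θ + S0⁻¹ *ᵥ μ₀)) x hScPD hBPD
end

section
/- Empirical DRP rank statistic is uniform for an optimal estimator: if θ* ~ p̂(·|x) and θ₁, …, θ_n are i.i.d. ~ p̂(·|x), all independent, and d(θ, θ_r) has a continuous distribution under p̂(·|x), then f := (1/n) Σⱼ 𝟙[d(θⱼ, θ_r) < d(θ*, θ_r)] satisfies P(f < 1 − α) → 1 − α as n → ∞, for any α ∈ (0,1). -/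
open MeasureTheory Filter

open MeasureTheory Filter Set

namespace Stmt18Aux

variable {m : ℕ}

/-- number of coordinates strictly below coordinate `i` -/
noncomputable def rk (v : Fin m → ℝ) (i : Fin m) : ℕ :=
  (Finset.univ.filter (fun k => v k < v i)).card

lemma measurable_rk (i : Fin m) : Measurable fun v : Fin m → ℝ => rk v i := by
  classical
  unfold rk
  simp_rw [Finset.card_filter]
  refine Finset.measurable_sum _ (fun k _ => ?_)
  exact Measurable.ite
    (measurableSet_lt (measurable_pi_apply k) (measurable_pi_apply i))
    measurable_const measurable_const

lemma rk_lt (v : Fin m → ℝ) (i : Fin m) : rk v i < m := by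
  classical
  have h : (Finset.univ.filter (fun k => v k < v i)) ⊆ Finset.univ.erase i := by
    intro k hk
    simp only [Finset.mem_filter] at hk
    refine Finset.mem_erase.2 ⟨?_, Finset.mem_univ _⟩
    rintro rfl; exact lt_irrefl _ hk.2
  calc rk v i ≤ (Finset.univ.erase i).card := Finset.card_le_card h
    _ < Finset.univ.card := Finset.card_erase_lt_of_mem (Finset.mem_univ i)
    _ = m := by simp

lemma rk_lt_rk {v : Fin m → ℝ} {i j : Fin m} (h : v i < v j) : rk v i < rk v j := by
  classical
  apply Finset.card_lt_card
  rw [Finset.ssubset_iff_of_subset]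
  · exact ⟨i, by simp [h], by simp⟩
  · intro k hk
    simp only [Finset.mem_filter, Finset.mem_univ, true_and] at hk ⊢
    exact hk.trans h

lemma rk_inj {v : Fin m → ℝ} (hv : Function.Injective v) :
    Function.Injective fun i => rk v i := by
  intro i j hij
  rcases lt_trichotomy (v i) (v j) with h | h | h
  · exact absurd hij (Nat.ne_of_lt (rk_lt_rk h))
  · exact hv h
  · exact absurd hij (Nat.ne_of_gt (rk_lt_rk h))

lemma rk_surj {v : Fin m → ℝ} (hv : Function.Injective v) {r : ℕ} (hr : r < m) :
    ∃ i, rk v i = r := by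
  have hinj : Function.Injective (fun i : Fin m => (⟨rk v i, rk_lt v i⟩ : Fin m)) := by
    intro i j h
    exact rk_inj hv (congrArg Fin.val h)
  obtain ⟨i, hi⟩ := (Finite.injective_iff_surjective.1 hinj) ⟨r, hr⟩
  exact ⟨i, congrArg Fin.val hi⟩

lemma rk_comp (v : Fin m → ℝ) (σ : Equiv.Perm (Fin m)) (i : Fin m) :
    rk (v ∘ σ) i = rk v (σ i) := by
  classical
  unfold rk
  apply Finset.card_equiv σ
  intro k
  simp

end Stmt18Aux

namespace Stmt18Aux

open scoped ENNReal

lemma measurableSet_inj : MeasurableSet {v : Fin m → ℝ | Function.Injective v} := by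
  classical
  have h : {v : Fin m → ℝ | Function.Injective v}
      = ⋂ (i : Fin m) (j : Fin m), {v | i ≠ j → v i ≠ v j} := by
    ext v
    simp only [Set.mem_setOf_eq, Set.mem_iInter, Function.Injective]
    constructor
    · intro h i j hij hvij; exact hij (h hvij)
    · intro h i j hvij; by_contra hne; exact h i j hne hvij
  rw [h]
  refine MeasurableSet.iInter fun i => MeasurableSet.iInter fun j => ?_
  by_cases hij : i = j
  · simp [hij]
  · have : {v : Fin m → ℝ | i ≠ j → v i ≠ v j} = {v | v i = v j}ᶜ := by
      ext v; simp [hij]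
    rw [this]
    exact (measurableSet_eq_fun (measurable_pi_apply i) (measurable_pi_apply j)).compl

lemma rank_uniform [NeZero m] (ν : Measure ℝ) [IsProbabilityMeasure ν]
    (hties : (Measure.pi (fun _ : Fin m => ν)) {v | ¬ Function.Injective v} = 0)
    {r : ℕ} (hr : r < m) :
    (Measure.pi fun _ : Fin m => ν) {v | rk v 0 = r} = 1 / m := by
  classical
  set π : Measure (Fin m → ℝ) := Measure.pi fun _ : Fin m => ν with hπ
  have : IsProbabilityMeasure π := by rw [hπ]; infer_instance
  set A : Fin m → Set (Fin m → ℝ) := fun i => {v | rk v i = r} with hA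
  have hAmeas : ∀ i, MeasurableSet (A i) := fun i =>
    measurable_rk i (measurableSet_singleton r)
  have hswap : ∀ i, π (A i) = π (A 0) := by
    intro i
    set σ : Equiv.Perm (Fin m) := Equiv.swap (0 : Fin m) i with hσ
    set e := MeasurableEquiv.piCongrLeft (fun _ : Fin m => ℝ) σ with he
    have mp : MeasurePreserving e π π :=
      measurePreserving_piCongrLeft (fun _ : Fin m => ν) σ
    have hev : ∀ v : Fin m → ℝ, e v = v ∘ σ.symm := by
      intro v
      funext j
      have : e v (σ (σ.symm j)) = v (σ.symm j) := by
        rw [he, MeasurableEquiv.coe_piCongrLeft]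
        exact Equiv.piCongrLeft_apply_apply (fun _ => ℝ) σ v (σ.symm j)
      simpa using this
    have hpre : e ⁻¹' (A i) = A 0 := by
      ext v
      simp only [Set.mem_preimage, hA, Set.mem_setOf_eq, hev v, rk_comp]
      rw [show σ.symm i = 0 by simp [hσ]]
    calc π (A i) = π (e ⁻¹' (A i)) := (mp.measure_preimage (hAmeas i).nullMeasurableSet).symm
      _ = π (A 0) := by rw [hpre]
  set D : Set (Fin m → ℝ) := {v | Function.Injective v} with hD
  have hDmeas : MeasurableSet D := measurableSet_inj
  have hDone : π D = 1 := by
    have h1 : π D + π Dᶜ = 1 := by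
      rw [measure_add_measure_compl hDmeas]; exact measure_univ
    have h2 : π Dᶜ = 0 := by exact hties
    rw [h2, add_zero] at h1; exact h1
  have hdisj : Pairwise (Function.onFun Disjoint fun i => A i ∩ D) := by
    intro i j hij
    refine Set.disjoint_left.2 fun v hvi hvj => ?_
    exact hij (rk_inj hvi.2 (hvi.1.trans hvj.1.symm))
  have hcover : (⋃ i, A i ∩ D) = D := by
    apply Set.Subset.antisymm
    · exact Set.iUnion_subset fun i => Set.inter_subset_right
    · intro v hv
      obtain ⟨i, hi⟩ := rk_surj hv hr
      exact Set.mem_iUnion.2 ⟨i, hi, hv⟩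
  have hsum : ∑ i : Fin m, π (A i) = 1 := by
    have h1 : π (⋃ i, A i ∩ D) = ∑' i, π (A i ∩ D) :=
      measure_iUnion hdisj fun i => (hAmeas i).inter hDmeas
    have h2 : ∀ i, π (A i ∩ D) = π (A i) := fun i =>
      measure_inter_conull (by exact hties)
    rw [hcover, hDone, tsum_fintype] at h1
    simp_rw [h2] at h1
    exact h1.symm
  have hm0 : (m : ℝ≥0∞) ≠ 0 := Nat.cast_ne_zero.2 (NeZero.ne m)
  have hsum' : (m : ℝ≥0∞) * π (A 0) = 1 := by
    calc (m : ℝ≥0∞) * π (A 0) = ∑ _i : Fin m, π (A 0) := by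
          simp [Finset.sum_const, nsmul_eq_mul]
      _ = ∑ i : Fin m, π (A i) := by exact (Finset.sum_congr rfl fun i _ => (hswap i).symm)
      _ = 1 := hsum
  exact (ENNReal.eq_div_iff hm0 (ENNReal.natCast_ne_top m)).2 hsum'

end Stmt18Aux
namespace Stmt18Aux

lemma ceil_div_tendsto {α : ℝ} (hα0 : 0 < α) (hα1 : α < 1) :
    Tendsto (fun n : ℕ => (⌈(n : ℝ) * (1 - α)⌉₊ : ℝ) / ((n : ℝ) + 1)) atTop (nhds (1 - α)) := by
  have h1α : 0 < 1 - α := by linarith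
  have lowerT : Tendsto (fun n : ℕ => ((n : ℝ) * (1 - α)) / ((n : ℝ) + 1)) atTop
      (nhds (1 - α)) := by
    have h := (tendsto_natCast_div_add_atTop (1 : ℝ)).const_mul (1 - α)
    rw [mul_one] at h
    refine h.congr fun n => ?_
    field_simp
  have upperT : Tendsto (fun n : ℕ => ((n : ℝ) * (1 - α) + 1) / ((n : ℝ) + 1)) atTop
      (nhds (1 - α)) := by
    have h := lowerT.add (tendsto_one_div_add_atTop_nhds_zero_nat)
    rw [add_zero] at h
    refine h.congr fun n => ?_
    rw [add_div]
  refine tendsto_of_tendsto_of_tendsto_of_le_of_le lowerT upperT ?_ ?_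
  · intro n
    have hpos : (0 : ℝ) < (n : ℝ) + 1 := by positivity
    exact (div_le_div_iff_of_pos_right hpos).2 (Nat.le_ceil _)
  · intro n
    have hpos : (0 : ℝ) < (n : ℝ) + 1 := by positivity
    exact (div_le_div_iff_of_pos_right hpos).2 (le_of_lt (Nat.ceil_lt_add_one (by positivity)))

end Stmt18Aux

open scoped ENNReal


/-- empirical DRP rank statistic is asymptotically uniform for an optimal
estimator. If θ* = Y 0 and the posterior samples Y 1, Y 2, … are i.i.d. from p̂(·|x) (all
independent and identically distributed), and the distance to the reference point θ_r has a
continuous (atomless) distribution, then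
f_n := (1/n) Σ_{j=1}^n 𝟙[d(Y j, θ_r) < d(Y 0, θ_r)] satisfies
P(f_n < 1 − α) → 1 − α as n → ∞, for any α ∈ (0,1). -/
theorem stmt18 {S : Type*} [MetricSpace S] [MeasurableSpace S] [BorelSpace S]
    {Ω : Type*} [MeasurableSpace Ω] (μ : Measure Ω) [IsProbabilityMeasure μ]
    (Y : ℕ → Ω → S) (θr : S)
    (hmeas : ∀ j, Measurable (Y j))
    (hindep : ProbabilityTheory.iIndepFun Y μ)
    (hident : ∀ j, ProbabilityTheory.IdentDistrib (Y j) (Y 0) μ μ)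
    (hcont : ∀ c : ℝ, μ {ω | dist (Y 0 ω) θr = c} = 0)
    (α : ℝ) (hα : α ∈ Set.Ioo (0 : ℝ) 1) :
    Tendsto (fun n : ℕ =>
        (μ {ω | (((Finset.range n).filter
            (fun j => dist (Y (j + 1) ω) θr < dist (Y 0 ω) θr)).card : ℝ) / (n : ℝ)
          < 1 - α}).toReal)
      atTop (nhds (1 - α)) := by
  classical
  obtain ⟨hα0, hα1⟩ := hα
  have h1α : 0 < 1 - α := by linarith
  set X : ℕ → Ω → ℝ := fun j ω => dist (Y j ω) θr with hXdef
  have hXmeas : ∀ j, Measurable (X j) := fun j =>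
    (Continuous.measurable (continuous_id.dist continuous_const)).comp (hmeas j)
  set ν : Measure ℝ := μ.map (X 0) with hν
  have hνprob : IsProbabilityMeasure ν := Measure.isProbabilityMeasure_map (hXmeas 0).aemeasurable
  have hgmeas : Measurable fun s : S => dist s θr :=
    Continuous.measurable (continuous_id.dist continuous_const)
  have hiid : ProbabilityTheory.iIndepFun X μ :=
    hindep.comp (fun _ => fun s => dist s θr) (fun _ => hgmeas)
  have hXmap : ∀ j, μ.map (X j) = ν := fun j => ((hident j).comp hgmeas).map_eq
  have hatom : ∀ c : ℝ, ν {c} = 0 := by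
    intro c
    rw [hν, Measure.map_apply (hXmeas 0) (measurableSet_singleton c)]
    have hpre : X 0 ⁻¹' {c} = {ω | dist (Y 0 ω) θr = c} := by
      ext ω; simp [hXdef]
    rw [hpre]; exact hcont c
  have hties : ∀ i j : ℕ, i ≠ j → μ {ω | X i ω = X j ω} = 0 := by
    intro i j hij
    have hind : ProbabilityTheory.IndepFun (X i) (X j) μ := hiid.indepFun hij
    have hmapped : μ.map (fun ω => (X i ω, X j ω)) = ν.prod ν := by
      rw [(ProbabilityTheory.indepFun_iff_map_prod_eq_prod_map_map (hXmeas i).aemeasurable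
        (hXmeas j).aemeasurable).1 hind, hXmap i, hXmap j]
    have hdiagmeas : MeasurableSet (Set.diagonal ℝ) := isClosed_diagonal.measurableSet
    have h1 : μ {ω | X i ω = X j ω} = (ν.prod ν) (Set.diagonal ℝ) := by
      rw [← hmapped, Measure.map_apply ((hXmeas i).prodMk (hXmeas j)) hdiagmeas]
      congr 1
    rw [h1, Measure.prod_apply hdiagmeas]
    have hfib : ∀ x : ℝ, (Prod.mk x ⁻¹' Set.diagonal ℝ) = {x} := by
      intro x; ext y; simp [Set.mem_diagonal_iff, eq_comm]
    simp_rw [hfib, hatom]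
    exact lintegral_zero
  -- the key finite-n computation
  have key : ∀ n : ℕ, 1 ≤ n →
      (μ {ω | (((Finset.range n).filter
          (fun j => dist (Y (j + 1) ω) θr < dist (Y 0 ω) θr)).card : ℝ) / (n : ℝ)
        < 1 - α}).toReal
        = (⌈(n : ℝ) * (1 - α)⌉₊ : ℝ) / ((n : ℝ) + 1) := by
    intro n hn
    have hn0 : (0 : ℝ) < n := by exact_mod_cast hn
    set m := n + 1 with hm
    have : NeZero m := ⟨by omega⟩
    set V : Ω → (Fin m → ℝ) := fun ω i => X i ω with hVdef
    have hVmeas : Measurable V := measurable_pi_lambda _ fun i => hXmeas i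
    set π : Measure (Fin m → ℝ) := Measure.pi fun _ => ν with hπ
    have hlaw : μ.map V = π := by
      rw [hπ]
      refine (Measure.pi_eq fun s hs => ?_).symm
      set t : ℕ → Set ℝ := fun k => if h : k < m then s ⟨k, h⟩ else Set.univ with ht
      have htmeas : ∀ k, MeasurableSet (t k) := by
        intro k
        rw [ht]
        dsimp only
        split
        · exact hs _
        · exact MeasurableSet.univ
      have hpre : V ⁻¹' Set.pi Set.univ s = ⋂ k ∈ Finset.range m, X k ⁻¹' t k := by
        ext ω
        simp only [Set.mem_preimage, Set.mem_pi, Set.mem_univ, forall_true_left,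
          Set.mem_iInter, Finset.mem_range]
        constructor
        · intro h k hk
          have h2 := h ⟨k, hk⟩
          simp only [ht, Set.mem_preimage]
          rw [dif_pos hk]
          exact h2
        · intro h i
          have h2 := h i i.isLt
          simp only [ht, Set.mem_preimage] at h2
          rw [dif_pos i.isLt, Fin.eta] at h2
          exact h2
      rw [Measure.map_apply hVmeas (MeasurableSet.univ_pi hs), hpre,
        hiid.meas_biInter (S := Finset.range m) (s := fun k => X k ⁻¹' t k)
          (fun k _ => ⟨t k, htmeas k, rfl⟩)]
      have hval : ∀ k, μ (X k ⁻¹' t k) = ν (t k) := fun k => by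
        rw [← hXmap k, Measure.map_apply (hXmeas k) (htmeas k)]
      calc ∏ k ∈ Finset.range m, μ (X k ⁻¹' t k)
          = ∏ k ∈ Finset.range m, ν (t k) := Finset.prod_congr rfl fun k _ => hval k
        _ = ∏ i : Fin m, ν (t i) := (Fin.prod_univ_eq_prod_range _ m).symm
        _ = ∏ i : Fin m, ν (s i) := by
            refine Finset.prod_congr rfl fun i _ => ?_
            congr 1
            simp only [ht]
            rw [dif_pos i.isLt, Fin.eta]
    have hnotinj : π {v : Fin m → ℝ | ¬ Function.Injective v} = 0 := by
      have hcompl : {v : Fin m → ℝ | ¬ Function.Injective v}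
          = {v : Fin m → ℝ | Function.Injective v}ᶜ := rfl
      rw [hcompl, ← hlaw,
        Measure.map_apply hVmeas (Stmt18Aux.measurableSet_inj (m := m)).compl]
      have hsub : V ⁻¹' {v : Fin m → ℝ | Function.Injective v}ᶜ ⊆
          ⋃ (i : Fin m) (j : Fin m), {ω | i ≠ j ∧ X i ω = X j ω} := by
        intro ω hω
        simp only [Set.mem_preimage, Set.mem_compl_iff, Set.mem_setOf_eq,
          Function.Injective] at hω
        push_neg at hω
        obtain ⟨i, j, hval, hne⟩ := hω
        exact Set.mem_iUnion.2 ⟨i, Set.mem_iUnion.2 ⟨j, hne, hval⟩⟩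
      refine measure_mono_null hsub ?_
      refine measure_iUnion_null fun i => measure_iUnion_null fun j => ?_
      by_cases hij : i = j
      · have hempty : {ω | i ≠ j ∧ X i ω = X j ω} = ∅ := by
          ext ω; simp [hij]
        simp [hempty]
      · refine measure_mono_null (fun ω h => h.2) (hties i j ?_)
        exact fun h => hij (Fin.val_injective h)
    set B : Set (Fin m → ℝ) := {v | (Stmt18Aux.rk v 0 : ℝ) / (n : ℝ) < 1 - α} with hB
    have hBmeas : MeasurableSet B := by
      have hBeq : B = (fun v : Fin m → ℝ => Stmt18Aux.rk v 0) ⁻¹'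
          {r : ℕ | (r : ℝ) / (n : ℝ) < 1 - α} := rfl
      rw [hBeq]
      exact Stmt18Aux.measurable_rk 0 trivial
    have hcard : ∀ ω, ((Finset.range n).filter
        (fun j => dist (Y (j + 1) ω) θr < dist (Y 0 ω) θr)).card = Stmt18Aux.rk (V ω) 0 := by
      intro ω
      unfold Stmt18Aux.rk
      refine Finset.card_bij' (fun j hj => (⟨j + 1, by
        simp only [Finset.mem_filter, Finset.mem_range] at hj; omega⟩ : Fin m))
        (fun k hk => (k : ℕ) - 1) ?_ ?_ ?_ ?_
      · intro j hj
        simp only [Finset.mem_filter, Finset.mem_range] at hj ⊢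
        exact ⟨Finset.mem_univ _, hj.2⟩
      · intro k hk
        simp only [Finset.mem_filter, Finset.mem_univ, true_and] at hk
        have hk0 : (k : ℕ) ≠ 0 := by
          intro h0
          have hVk : V ω k = V ω 0 := by
            show X (k : ℕ) ω = X ((0 : Fin m) : ℕ) ω
            rw [h0]; rfl
          rw [hVk] at hk
          exact lt_irrefl _ hk
        simp only [Finset.mem_filter, Finset.mem_range]
        constructor
        · have := k.isLt; omega
        · have hrw : (k : ℕ) - 1 + 1 = (k : ℕ) := by omega
          show dist (Y ((k : ℕ) - 1 + 1) ω) θr < dist (Y 0 ω) θr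
          rw [hrw]
          exact hk
      · intro j hj; simp
      · intro k hk
        simp only [Finset.mem_filter, Finset.mem_univ, true_and] at hk
        have hk0 : (k : ℕ) ≠ 0 := by
          intro h0
          have hVk : V ω k = V ω 0 := by
            show X (k : ℕ) ω = X ((0 : Fin m) : ℕ) ω
            rw [h0]; rfl
          rw [hVk] at hk
          exact lt_irrefl _ hk
        apply Fin.ext
        show (k : ℕ) - 1 + 1 = (k : ℕ)
        omega
    have hEB : {ω | (((Finset.range n).filter
        (fun j => dist (Y (j + 1) ω) θr < dist (Y 0 ω) θr)).card : ℝ) / (n : ℝ) < 1 - α}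
        = V ⁻¹' B := by
      ext ω
      simp only [Set.mem_setOf_eq, Set.mem_preimage, hB, hcard ω]
    have hμE : μ {ω | (((Finset.range n).filter
        (fun j => dist (Y (j + 1) ω) θr < dist (Y 0 ω) θr)).card : ℝ) / (n : ℝ) < 1 - α}
        = π B := by
      rw [hEB, ← hlaw, Measure.map_apply hVmeas hBmeas]
    set K := ⌈(n : ℝ) * (1 - α)⌉₊ with hK
    have hKn : K ≤ n := by
      rw [hK, Nat.ceil_le]
      nlinarith
    have hBeq2 : B = ⋃ r ∈ Finset.range K, {v : Fin m → ℝ | Stmt18Aux.rk v 0 = r} := by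
      ext v
      simp only [hB, Set.mem_setOf_eq, Set.mem_iUnion, Finset.mem_range, exists_prop]
      constructor
      · intro h
        refine ⟨Stmt18Aux.rk v 0, ?_, rfl⟩
        rw [hK, Nat.lt_ceil]
        rw [div_lt_iff₀ hn0] at h
        linarith
      · rintro ⟨r, hr, hrk⟩
        rw [hrk]
        rw [hK, Nat.lt_ceil] at hr
        rw [div_lt_iff₀ hn0]
        linarith
    have hrank : ∀ r ∈ Finset.range K, π {v : Fin m → ℝ | Stmt18Aux.rk v 0 = r}
        = 1 / (m : ℝ≥0∞) := by
      intro r hr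
      refine Stmt18Aux.rank_uniform ν hnotinj ?_
      have := Finset.mem_range.1 hr
      omega
    have hπB : π B = (K : ℝ≥0∞) / (m : ℝ≥0∞) := by
      rw [hBeq2, measure_biUnion_finset ?_ ?_]
      · rw [Finset.sum_congr rfl hrank]
        simp only [Finset.sum_const, Finset.card_range, nsmul_eq_mul]
        rw [mul_one_div]
      · intro r hr r' hr' hrr'
        refine Set.disjoint_left.2 fun v hv hv' => ?_
        exact hrr' (hv.symm.trans hv')
      · intro r hr
        exact Stmt18Aux.measurable_rk 0 (measurableSet_singleton r)
    rw [hμE, hπB]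
    rw [ENNReal.toReal_div]
    simp only [ENNReal.toReal_natCast]
    congr 1
    rw [hm]
    push_cast
    ring
  refine Tendsto.congr' ?_ (Stmt18Aux.ceil_div_tendsto hα0 hα1)
  filter_upwards [eventually_ge_atTop 1] with n hn
  exact (key n hn).symm
end
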